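/- Let q be an odd prime with q ≡ 3 (mod 4), let ν generate the group of units (ZMod q)ˣ, and set c = !![1, 0; 1, 1] and d = !![1, 0; ν, 1] in SL₂(ZMod q). Then an element g of SL₂(ZMod q) is conjugate to its inverse g⁻¹ if and only if g is conjugate to none of c, d, -c, -d. -/

import Mathlib

open Matrix

namespace RealCD

variable {q : ℕ} [Fact (Nat.Prime q)]

abbrev SL2 (q : ℕ) [Fact (Nat.Prime q)] := Matrix.SpecialLinearGroup (Fin 2) (ZMod q)

def lower (m : ZMod q) : SL2 q := ⟨!![1,0;m,1], by simp [Matrix.det_fin_two_of]⟩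

def comp (t : ZMod q) : SL2 q := ⟨!![0,-1;1,t], by simp [Matrix.det_fin_two_of]⟩

lemma isConj_of_semiconj (g h : SL2 q) (M : Matrix (Fin 2) (Fin 2) (ZMod q))
    (hM : M.det = 1)
    (hs : M * (g : Matrix (Fin 2) (Fin 2) (ZMod q)) = (h : Matrix (Fin 2) (Fin 2) (ZMod q)) * M) :
    IsConj g h := by
  refine isConj_iff.mpr ⟨⟨M, hM⟩, ?_⟩
  apply mul_inv_eq_of_eq_mul
  apply Subtype.coe_injective
  exact hs

lemma coe_semiconj_of_isConj (g h : SL2 q) (hc : IsConj g h) :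
    ∃ P : SL2 q, (P : Matrix (Fin 2) (Fin 2) (ZMod q)) * g
      = (h : Matrix (Fin 2) (Fin 2) (ZMod q)) * P := by
  obtain ⟨P, hP⟩ := isConj_iff.mp hc
  have h2 : P * g = h * P := by rw [← hP]; group
  refine ⟨P, ?_⟩
  calc (P : Matrix (Fin 2) (Fin 2) (ZMod q)) * g
      = ((P * g : SL2 q) : Matrix (Fin 2) (Fin 2) (ZMod q)) := by simp
    _ = ((h * P : SL2 q) : Matrix (Fin 2) (Fin 2) (ZMod q)) := by rw [h2]
    _ = (h : Matrix (Fin 2) (Fin 2) (ZMod q)) * P := by simp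

lemma exists_rep (hq : Odd q) (α γ δ : ZMod q) (hα : α ≠ 0) (hγ : γ ≠ 0) :
    ∃ x y : ZMod q, α * x^2 + γ * y^2 = δ := by
  have hcard : Fintype.card (ZMod q) % 2 = 1 := by
    rw [ZMod.card]; exact Nat.odd_iff.mp hq
  have h := FiniteField.exists_root_sum_quadratic
    (f := Polynomial.C α * Polynomial.X^2 + Polynomial.C 0 * Polynomial.X + Polynomial.C (-δ))
    (g := Polynomial.C γ * Polynomial.X^2 + Polynomial.C 0 * Polynomial.X + Polynomial.C 0)
    (Polynomial.degree_quadratic hα) (Polynomial.degree_quadratic hγ) hcard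
  obtain ⟨x, y, hxy⟩ := h
  refine ⟨x, y, ?_⟩
  simp only [Polynomial.eval_add, Polynomial.eval_mul, Polynomial.eval_pow,
    Polynomial.eval_C, Polynomial.eval_X] at hxy
  linear_combination hxy

lemma two_ne_zero_zmod (hq : Odd q) : (2 : ZMod q) ≠ 0 := by
  have h : ringChar (ZMod q) = q := ZMod.ringChar_zmod_n q
  exact Ring.two_ne_zero (by rw [h]; rintro rfl; exact (by decide : ¬ Odd 2) hq)

lemma exists_Q (hq : Odd q) (a b c e : ZMod q) (hdet : a * e - b * c = 1)
    (ht : (a + e)^2 ≠ 4) :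
    ∃ x y : ZMod q, c * x^2 + (e - a) * x * y - b * y^2 = 1 := by
  by_cases hc : c = 0
  · subst hc
    have hae : a * e = 1 := by linear_combination hdet
    have hea : e - a ≠ 0 := by
      intro h
      apply ht
      linear_combination (e - a) * h + 4 * hae
    exact ⟨(1 + b)/(e - a), 1, by field_simp; ring⟩
  · have h2 : (2 : ZMod q) ≠ 0 := two_ne_zero_zmod hq
    have h4 : (4 : ZMod q) ≠ 0 := by
      have h44 : (4 : ZMod q) = 2 * 2 := by norm_num
      rw [h44]; exact mul_ne_zero h2 h2
    have hγ : (4 - (a+e)^2) / (4 * c) ≠ 0 :=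
      div_ne_zero (sub_ne_zero.mpr (Ne.symm ht)) (mul_ne_zero h4 hc)
    obtain ⟨u, y, huy⟩ := exists_rep hq c⁻¹ ((4 - (a+e)^2) / (4 * c)) 1 (inv_ne_zero hc) hγ
    set x := (2*u - (e - a) * y) / (2*c) with hxdef
    have hx : (2*c) * x = 2*u - (e - a) * y := mul_div_cancel₀ _ (mul_ne_zero h2 hc)
    field_simp at huy
    have huy' : 4*u^2 + (4 - (a+e)^2)*y^2 = 4*c := by
      refine mul_right_cancel₀ hc ?_
      linear_combination c * huy
    refine ⟨x, y, ?_⟩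
    have h4c : (4 : ZMod q) * c ≠ 0 := mul_ne_zero h4 hc
    refine mul_left_cancel₀ h4c ?_
    linear_combination (2*c*x + 2*u + (e-a)*y) * hx + huy' + 4*y^2*hdet

lemma isConj_comp (g : SL2 q) (a b c e : ZMod q)
    (hgm : (g : Matrix (Fin 2) (Fin 2) (ZMod q)) = !![a,b;c,e])
    (x y : ZMod q) (hQ : c * x^2 + (e - a) * x * y - b * y^2 = 1) :
    IsConj (comp (a + e)) g := by
  have hdet : a * e - b * c = 1 := by
    have h2 := g.2
    rw [hgm, Matrix.det_fin_two_of] at h2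
    exact h2
  apply isConj_of_semiconj _ _ !![x, a*x+b*y; y, c*x+e*y]
  · rw [Matrix.det_fin_two_of]; linear_combination hQ
  · have hcomp : (comp (a + e) : Matrix (Fin 2) (Fin 2) (ZMod q)) = !![0,-1;1,a+e] := rfl
    rw [hcomp, hgm, Matrix.mul_fin_two, Matrix.mul_fin_two]
    ext i j
    fin_cases i <;> fin_cases j <;> simp <;>
      first
        | ring1
        | linear_combination x * hdet
        | linear_combination y * hdet

lemma conj_lower_of (g : SL2 q) (a b c e : ZMod q)
    (hgm : (g : Matrix (Fin 2) (Fin 2) (ZMod q)) = !![a,b;c,e])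
    (htr : a + e = 2) (hg : g ≠ 1) :
    ∃ m : ZMod q, m ≠ 0 ∧ IsConj (lower m) g := by
  have hdet : a * e - b * c = 1 := by
    have h2 := g.2; rw [hgm, Matrix.det_fin_two_of] at h2; exact h2
  by_cases hbz : b = 0
  · have ha1 : a = 1 := by
      have h1 : (a - 1)^2 = 0 := by linear_combination a*htr - hdet - c*hbz
      have h2 := pow_eq_zero_iff (n := 2) (by norm_num) |>.mp h1
      exact sub_eq_zero.mp h2
    have he1 : e = 1 := by linear_combination htr - ha1
    have hcz : c ≠ 0 := by
      intro hcz
      apply hg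
      apply Subtype.coe_injective
      show (g : Matrix (Fin 2) (Fin 2) (ZMod q)) = ((1 : SL2 q) : Matrix (Fin 2) (Fin 2) (ZMod q))
      rw [hgm, ha1, hbz, he1, hcz]
      simp [Matrix.one_fin_two]
    refine ⟨c, hcz, ?_⟩
    have heq : lower c = g := by
      apply Subtype.coe_injective
      show (lower c : Matrix (Fin 2) (Fin 2) (ZMod q)) = (g : Matrix (Fin 2) (Fin 2) (ZMod q))
      rw [hgm, ha1, hbz, he1]
      rfl
    rw [heq]
  · refine ⟨-b⁻¹, by simp [hbz], ?_⟩
    apply isConj_of_semiconj _ _ !![0, b; -b⁻¹, 1-a]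
    · rw [Matrix.det_fin_two_of]; field_simp; ring
    · have hl : (lower (-b⁻¹) : Matrix (Fin 2) (Fin 2) (ZMod q)) = !![1,0;-b⁻¹,1] := rfl
      rw [hl, hgm, Matrix.mul_fin_two, Matrix.mul_fin_two]
      ext i j
      fin_cases i <;> fin_cases j <;> simp <;>
        first
          | ring1
          | linear_combination b⁻¹ * htr
          | linear_combination hdet - htr

lemma conj_lower_sq (m u : ZMod q) (hu : u ≠ 0) : IsConj (lower m) (lower (m * u^2)) := by
  apply isConj_of_semiconj _ _ !![u⁻¹, 0; 0, u]
  · rw [Matrix.det_fin_two_of]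
    field_simp
    ring
  · show !![u⁻¹, 0; 0, u] * !![1,0;m,1] = !![1,0;m*u^2,1] * !![u⁻¹, 0; 0, u]
    rw [Matrix.mul_fin_two, Matrix.mul_fin_two]
    have huu : u * u⁻¹ = 1 := mul_inv_cancel₀ hu
    ext i j
    fin_cases i <;> fin_cases j <;> simp <;>
      first
        | ring1
        | linear_combination -(m * u) * huu

lemma sq_or_nu_sq (ν : (ZMod q)ˣ) (hν : ∀ x : (ZMod q)ˣ, x ∈ Subgroup.zpowers ν)
    (x : ZMod q) (hx : x ≠ 0) :
    (∃ s : ZMod q, s ≠ 0 ∧ x = 1 * s^2) ∨ (∃ s : ZMod q, s ≠ 0 ∧ x = (ν : ZMod q) * s^2) := by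
  obtain ⟨k, hk⟩ := Subgroup.mem_zpowers_iff.mp (hν (Units.mk0 x hx))
  have hxk : x = ((ν ^ k : (ZMod q)ˣ) : ZMod q) := by rw [hk]; rfl
  rcases Int.even_or_odd k with ⟨j, hj⟩ | ⟨j, hj⟩
  · left
    refine ⟨((ν ^ j : (ZMod q)ˣ) : ZMod q), Units.ne_zero _, ?_⟩
    have h1 : ν ^ k = ν ^ j * ν ^ j := by rw [hj, _root_.zpow_add]
    rw [hxk, h1, Units.val_mul]
    ring
  · right
    refine ⟨((ν ^ j : (ZMod q)ˣ) : ZMod q), Units.ne_zero _, ?_⟩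
    have h1 : ν ^ k = ν * (ν ^ j * ν ^ j) := by
      rw [hj, _root_.zpow_add, _root_.zpow_one, two_mul, _root_.zpow_add]
      exact mul_comm _ _
    rw [hxk, h1, Units.val_mul, Units.val_mul]
    ring

lemma lower_inv (m : ZMod q) : (lower m)⁻¹ = lower (-m) := by
  apply inv_eq_of_mul_eq_one_right
  apply Subtype.coe_injective
  show (lower m : Matrix (Fin 2) (Fin 2) (ZMod q)) * (lower (-m) : Matrix (Fin 2) (Fin 2) (ZMod q))
      = ((1 : SL2 q) : Matrix (Fin 2) (Fin 2) (ZMod q))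
  have h1 : ((1 : SL2 q) : Matrix (Fin 2) (Fin 2) (ZMod q)) = 1 := rfl
  rw [h1, Matrix.one_fin_two]
  show !![1,0;m,1] * !![1,0;-m,1] = _
  rw [Matrix.mul_fin_two]
  norm_num

lemma not_isConj_lower_inv (hq4 : q % 4 = 3) (m : ZMod q) (hm : m ≠ 0) :
    ¬ IsConj (lower m) (lower m)⁻¹ := by
  intro h
  rw [lower_inv] at h
  obtain ⟨P, hmat⟩ := coe_semiconj_of_isConj _ _ h
  obtain ⟨p, r, s, w, hPm⟩ : ∃ p r s w, (P : Matrix (Fin 2) (Fin 2) (ZMod q)) = !![p,r;s,w] :=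
    ⟨_, _, _, _, Matrix.eta_fin_two _⟩
  have hl : (lower m : Matrix (Fin 2) (Fin 2) (ZMod q)) = !![1,0;m,1] := rfl
  have hl' : (lower (-m) : Matrix (Fin 2) (Fin 2) (ZMod q)) = !![1,0;-m,1] := rfl
  rw [hl, hl', hPm, Matrix.mul_fin_two, Matrix.mul_fin_two] at hmat
  have hij := fun i j => (Matrix.ext_iff.mpr hmat) i j
  have h00 := hij 0 0
  have h10 := hij 1 0
  simp at h00 h10
  have hr : r = 0 := by
    rcases h00 with h' | h'
    · exact h'
    · exact absurd h' hm
  have hw : w = -p := by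
    rcases mul_eq_zero.mp (by linear_combination h10 : (w + p) * m = 0) with h' | h'
    · exact eq_neg_of_add_eq_zero_left h'
    · exact absurd h' hm
  have hdet : p * w - r * s = 1 := by
    have h2 := P.2
    rw [hPm, Matrix.det_fin_two_of] at h2
    exact h2
  have hsq : IsSquare (-1 : ZMod q) := by
    refine ⟨p, ?_⟩
    rw [hr, hw] at hdet
    linear_combination hdet
  exact (ZMod.exists_sq_eq_neg_one_iff.mp hsq) hq4

lemma isConj_inv_of (a b : SL2 q) (h : IsConj a b) : IsConj a⁻¹ b⁻¹ := by
  obtain ⟨P, hP⟩ := isConj_iff.mp h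
  exact isConj_iff.mpr ⟨P, by rw [← hP]; group⟩

lemma isConj_neg (a b : SL2 q) (h : IsConj a b) : IsConj (-a) (-b) := by
  obtain ⟨P, hmat⟩ := coe_semiconj_of_isConj _ _ h
  apply isConj_of_semiconj _ _ (P : Matrix (Fin 2) (Fin 2) (ZMod q)) P.2
  rw [Matrix.SpecialLinearGroup.coe_neg, Matrix.SpecialLinearGroup.coe_neg,
    Matrix.mul_neg, Matrix.neg_mul, hmat]

lemma neg_inv_SL (a : SL2 q) : (-a)⁻¹ = -(a⁻¹) := by
  apply inv_eq_of_mul_eq_one_right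
  rw [neg_mul_neg]
  simp

lemma not_isConj_neg_lower_inv (hq4 : q % 4 = 3) (m : ZMod q) (hm : m ≠ 0) :
    ¬ IsConj (-(lower m)) (-(lower m))⁻¹ := by
  intro h
  rw [neg_inv_SL] at h
  have h2 := isConj_neg _ _ h
  rw [neg_neg, neg_neg] at h2
  exact not_isConj_lower_inv hq4 m hm h2

end RealCD

open RealCD in
theorem real_iff_not_conj_cd (q : ℕ) [Fact (Nat.Prime q)] (hq : Odd q)
    (hq4 : q % 4 = 3)
    (ν : (ZMod q)ˣ) (hν : ∀ x : (ZMod q)ˣ, x ∈ Subgroup.zpowers ν)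
    (c d : Matrix.SpecialLinearGroup (Fin 2) (ZMod q))
    (hc : (c : Matrix (Fin 2) (Fin 2) (ZMod q)) = !![1, 0; 1, 1])
    (hd : (d : Matrix (Fin 2) (Fin 2) (ZMod q)) = !![1, 0; (ν : ZMod q), 1])
    (g : Matrix.SpecialLinearGroup (Fin 2) (ZMod q)) :
    IsConj g g⁻¹ ↔ ¬ IsConj g c ∧ ¬ IsConj g d ∧ ¬ IsConj g (-c) ∧ ¬ IsConj g (-d) := by
  have hc' : c = lower 1 := Subtype.coe_injective
    (show (c : Matrix (Fin 2) (Fin 2) (ZMod q)) = _ by rw [hc]; rfl)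
  have hd' : d = lower (ν : ZMod q) := Subtype.coe_injective
    (show (d : Matrix (Fin 2) (Fin 2) (ZMod q)) = _ by rw [hd]; rfl)
  have hν0 : (ν : ZMod q) ≠ 0 := Units.ne_zero ν
  constructor
  · intro hreal
    refine ⟨fun hgc => ?_, fun hgd => ?_, fun hgc => ?_, fun hgd => ?_⟩
    · rw [hc'] at hgc
      exact not_isConj_lower_inv hq4 1 one_ne_zero
        ((hgc.symm.trans hreal).trans (isConj_inv_of _ _ hgc))
    · rw [hd'] at hgd
      exact not_isConj_lower_inv hq4 _ hν0
        ((hgd.symm.trans hreal).trans (isConj_inv_of _ _ hgd))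
    · rw [hc'] at hgc
      exact not_isConj_neg_lower_inv hq4 1 one_ne_zero
        ((hgc.symm.trans hreal).trans (isConj_inv_of _ _ hgc))
    · rw [hd'] at hgd
      exact not_isConj_neg_lower_inv hq4 _ hν0
        ((hgd.symm.trans hreal).trans (isConj_inv_of _ _ hgd))
  · rintro ⟨h1, h2, h3, h4⟩
    obtain ⟨a, b, c0, e, hgm⟩ :
        ∃ a b c0 e, (g : Matrix (Fin 2) (Fin 2) (ZMod q)) = !![a,b;c0,e] :=
      ⟨_, _, _, _, Matrix.eta_fin_two _⟩
    have hdet : a * e - b * c0 = 1 := by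
      have hh := g.2; rw [hgm, Matrix.det_fin_two_of] at hh; exact hh
    by_cases htr4 : (a + e)^2 = 4
    · have hsplit : (a + e - 2) * (a + e + 2) = 0 := by linear_combination htr4
      rcases mul_eq_zero.mp hsplit with hA | hA
      · -- trace 2
        have htr : a + e = 2 := by linear_combination hA
        by_cases hg1 : g = 1
        · rw [hg1, inv_one]
        · obtain ⟨m, hm0, hconj⟩ := conj_lower_of g a b c0 e hgm htr hg1
          rcases sq_or_nu_sq ν hν m hm0 with ⟨s, hs0, hms⟩ | ⟨s, hs0, hms⟩
          · refine absurd ?_ h1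
            rw [hc']
            exact (((conj_lower_sq 1 s hs0).trans (by rw [← hms])).trans hconj).symm
          · refine absurd ?_ h2
            rw [hd']
            exact (((conj_lower_sq (ν : ZMod q) s hs0).trans (by rw [← hms])).trans hconj).symm
      · -- trace -2
        have htr : a + e = -2 := by linear_combination hA
        by_cases hg1 : g = -1
        · rw [hg1, neg_inv_SL, inv_one]
        · have hgm' : ((-g : Matrix.SpecialLinearGroup (Fin 2) (ZMod q))
              : Matrix (Fin 2) (Fin 2) (ZMod q)) = !![-a,-b;-c0,-e] := by
            rw [Matrix.SpecialLinearGroup.coe_neg, hgm]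
            ext i j
            fin_cases i <;> fin_cases j <;> simp
          have htr' : -a + -e = 2 := by linear_combination -htr
          have hg1' : -g ≠ 1 := by
            intro hh
            apply hg1
            have := congrArg Neg.neg hh
            rwa [neg_neg] at this
          obtain ⟨m, hm0, hconj⟩ := conj_lower_of (-g) (-a) (-b) (-c0) (-e) hgm' htr' hg1'
          rcases sq_or_nu_sq ν hν m hm0 with ⟨s, hs0, hms⟩ | ⟨s, hs0, hms⟩
          · refine absurd ?_ h3
            rw [hc']
            have hcg : IsConj (lower 1) (-g) :=
              ((conj_lower_sq 1 s hs0).trans (by rw [← hms])).trans hconj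
            have := isConj_neg _ _ hcg
            rw [neg_neg] at this
            exact this.symm
          · refine absurd ?_ h4
            rw [hd']
            have hcg : IsConj (lower (ν : ZMod q)) (-g) :=
              ((conj_lower_sq (ν : ZMod q) s hs0).trans (by rw [← hms])).trans hconj
            have := isConj_neg _ _ hcg
            rw [neg_neg] at this
            exact this.symm
    · -- trace generic: conjugate to companion
      obtain ⟨x, y, hQ⟩ := exists_Q hq a b c0 e hdet htr4
      have hconj1 : IsConj (comp (a + e)) g := isConj_comp g a b c0 e hgm x y hQ
      have hginv : ((g⁻¹ : Matrix.SpecialLinearGroup (Fin 2) (ZMod q))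
          : Matrix (Fin 2) (Fin 2) (ZMod q)) = !![e,-b;-c0,a] := by
        rw [Matrix.SpecialLinearGroup.coe_inv, hgm, Matrix.adjugate_fin_two_of]
      have hdet' : e * a - (-b) * (-c0) = 1 := by linear_combination hdet
      have htr4' : (e + a)^2 ≠ 4 := by rwa [add_comm]
      obtain ⟨x', y', hQ'⟩ := exists_Q hq e (-b) (-c0) a hdet' htr4'
      have hconj2 : IsConj (comp (e + a)) g⁻¹ := isConj_comp g⁻¹ e (-b) (-c0) a hginv x' y' hQ'
      rw [add_comm e a] at hconj2
      exact hconj1.symm.trans hconj2
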